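/- arXiv:1401.4417 — 9 statements merged into one kernel-verified Lean document; each statement's English description precedes it below -/
import Mathlib

section
/- Let f(x) = B(x,x) + Lx + c be a quadratic vector field on ℝ^N, and let h ∈ ℝ. For any x ∈ ℝ^N such that the matrix I − (h/2)f'(x) is invertible, the vector x̃ := x + h (I − (h/2)f'(x))^{-1} f(x) is the unique solution of the Kahan discretization relation (x̃ − x)/h = B(x, x̃) + (1/2)L(x + x̃) + c. -/
/-- Kahan's discretization of a quadratic vector field `f x = B x x + L x + c`
is the relation `(x̃ - x)/h = B(x, x̃) + (1/2) L (x + x̃) + c`.  If the matrix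
`I - (h/2) f'(x)` is invertible (with two-sided inverse `Minv`), then
`x̃ := x + h Minv (f x)` is the unique solution of the Kahan relation. -/
theorem kahan_forward_explicit (N : ℕ) (h : ℝ)
    (B : (Fin N → ℝ) →ₗ[ℝ] (Fin N → ℝ) →ₗ[ℝ] (Fin N → ℝ))
    (hB : ∀ u v, B u v = B v u)
    (L : (Fin N → ℝ) →ₗ[ℝ] (Fin N → ℝ)) (c : Fin N → ℝ)
    (f : (Fin N → ℝ) → (Fin N → ℝ)) (hf : ∀ x, f x = B x x + L x + c)
    (x : Fin N → ℝ)
    (Minv : (Fin N → ℝ) →ₗ[ℝ] (Fin N → ℝ))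
    (hM1 : Minv ∘ₗ (LinearMap.id - (h / 2) • ((2 : ℝ) • B x + L)) = LinearMap.id)
    (hM2 : (LinearMap.id - (h / 2) • ((2 : ℝ) • B x + L)) ∘ₗ Minv = LinearMap.id) :
    ((x + h • Minv (f x)) - x
        = h • (B x (x + h • Minv (f x)) + (1 / 2 : ℝ) • L (x + (x + h • Minv (f x))) + c))
    ∧ (∀ xt : Fin N → ℝ,
        xt - x = h • (B x xt + (1 / 2 : ℝ) • L (x + xt) + c) →
        xt = x + h • Minv (f x)) := by
  set M : (Fin N → ℝ) →ₗ[ℝ] (Fin N → ℝ) :=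
    LinearMap.id - (h / 2) • ((2 : ℝ) • B x + L) with hMdef
  have hMapp : ∀ y, M y = y - h • B x y - (h / 2) • L y := by
    intro y
    simp only [hMdef, LinearMap.sub_apply, LinearMap.smul_apply, LinearMap.add_apply,
      LinearMap.id_apply, smul_add]
    module
  -- the Kahan relation for xt = x + y is equivalent to M y = h • f x
  have key : ∀ y : Fin N → ℝ,
      ((x + y) - x = h • (B x (x + y) + (1 / 2 : ℝ) • L (x + (x + y)) + c))
        ↔ M y = h • f x := by
    intro y
    rw [hMapp, hf]
    have h1 : B x (x + y) = B x x + B x y := map_add _ _ _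
    have h2 : L (x + (x + y)) = L x + (L x + L y) := by rw [map_add, map_add]
    rw [h1, h2]
    set a := B x y with ha
    set l := L y with hl
    constructor
    · intro he
      have hy : y = h • (B x x + a + (1 / 2 : ℝ) • (L x + (L x + l)) + c) := by
        rw [← he]; abel
      rw [hy]; module
    · intro he
      have hy : y = h • (B x x + L x + c) + h • a + (h / 2) • l := by
        rw [← he]; abel
      rw [hy]; module
  constructor
  · rw [key]
    have := congrArg (fun g => g (f x)) hM2
    simp only [LinearMap.comp_apply, LinearMap.id_apply] at this
    rw [map_smul, this]
  · intro xt hxt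
    have hx : (x + (xt - x)) - x = xt - x := by abel
    have h2 : M (xt - x) = h • f x := by
      rw [← key (xt - x)]
      have : x + (xt - x) = xt := by abel
      rw [this]; exact hxt
    have := congrArg (fun g => g (xt - x)) hM1
    simp only [LinearMap.comp_apply, LinearMap.id_apply] at this
    rw [h2, map_smul] at this
    rw [this]; abel
end

section
/- Let f(x) = B(x,x) + Lx + c be a quadratic vector field on ℝ^N and h ∈ ℝ. If x, x̃ ∈ ℝ^N satisfy the Kahan relation (x̃ − x)/h = B(x, x̃) + (1/2)L(x + x̃) + c and the matrix I + (h/2)f'(x̃) is invertible, then x = x̃ − h (I + (h/2)f'(x̃))^{-1} f(x̃); in other words, the inverse of Kahan's map is given explicitly by this formula. -/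
/-- If `x, x̃` satisfy the Kahan relation for the quadratic vector field
`f x = B x x + L x + c` and the matrix `I + (h/2) f'(x̃)` is invertible
(with two-sided inverse `Minv`), then `x = x̃ - h Minv (f x̃)`: the inverse of
Kahan's map is given explicitly by this formula. -/
theorem kahan_inverse_explicit (N : ℕ) (h : ℝ)
    (B : (Fin N → ℝ) →ₗ[ℝ] (Fin N → ℝ) →ₗ[ℝ] (Fin N → ℝ))
    (hB : ∀ u v, B u v = B v u)
    (L : (Fin N → ℝ) →ₗ[ℝ] (Fin N → ℝ)) (c : Fin N → ℝ)
    (f : (Fin N → ℝ) → (Fin N → ℝ)) (hf : ∀ x, f x = B x x + L x + c)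
    (x xt : Fin N → ℝ)
    (hrel : xt - x = h • (B x xt + (1 / 2 : ℝ) • L (x + xt) + c))
    (Minv : (Fin N → ℝ) →ₗ[ℝ] (Fin N → ℝ))
    (hM1 : Minv ∘ₗ (LinearMap.id + (h / 2) • ((2 : ℝ) • B xt + L)) = LinearMap.id)
    (hM2 : (LinearMap.id + (h / 2) • ((2 : ℝ) • B xt + L)) ∘ₗ Minv = LinearMap.id) :
    x = xt - h • Minv (f xt) := by
  set M : (Fin N → ℝ) →ₗ[ℝ] (Fin N → ℝ) :=
    LinearMap.id + (h / 2) • ((2 : ℝ) • B xt + L) with hMdef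
  have key : M (xt - x) = h • f xt := by
    have e1 : M (xt - x) = (xt - x) +
        ((h • B xt xt - h • B xt x) + ((h/2) • L xt - (h/2) • L x)) := by
      simp only [hMdef, LinearMap.add_apply, LinearMap.smul_apply, LinearMap.id_apply,
        map_sub, map_add, map_smul, smul_sub, smul_add, smul_smul]
      module
    rw [e1, hrel, hf, hB xt x, map_add]
    module
  have hinv : ∀ v, Minv (M v) = v := fun v => by
    have := congrFun (congrArg (fun g => g.toFun) hM1) v
    simpa using this
  have := congrArg Minv key
  rw [hinv, map_smul] at this
  rw [← this]
  abel
end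

section
/- Let f(x) = B(x,x) + Lx + c be a quadratic vector field on ℝ^N, where B is a symmetric bilinear map, L is linear and c is constant. Then for all x, x̃ ∈ ℝ^N, the quadratic form appearing in Kahan's discretization satisfies B(x, x̃) + (1/2)L(x + x̃) + c = −(1/2)f(x) + 2 f((x + x̃)/2) − (1/2)f(x̃). Consequently Kahan's method coincides, for quadratic vector fields, with the Runge–Kutta method (x̃ − x)/h = −(1/2)f(x) + 2 f((x + x̃)/2) − (1/2)f(x̃). -/
/-- For a quadratic vector field `f x = B x x + L x + c` (with `B` symmetric bilinear),
the Kahan form satisfies `B x x̃ + (1/2) L (x + x̃) + c = -(1/2) f x + 2 f((x+x̃)/2) - (1/2) f x̃`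
for all `x, x̃`; consequently Kahan's method coincides with the Runge–Kutta method
`(x̃ - x)/h = -(1/2) f x + 2 f((x+x̃)/2) - (1/2) f x̃` for quadratic vector fields. -/
theorem kahan_is_runge_kutta (N : ℕ)
    (B : (Fin N → ℝ) →ₗ[ℝ] (Fin N → ℝ) →ₗ[ℝ] (Fin N → ℝ))
    (hB : ∀ u v, B u v = B v u)
    (L : (Fin N → ℝ) →ₗ[ℝ] (Fin N → ℝ)) (c : Fin N → ℝ)
    (f : (Fin N → ℝ) → (Fin N → ℝ)) (hf : ∀ x, f x = B x x + L x + c) :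
    ∀ x xt : Fin N → ℝ,
      (B x xt + (1 / 2 : ℝ) • L (x + xt) + c
        = -((1 / 2 : ℝ) • f x) + (2 : ℝ) • f ((1 / 2 : ℝ) • (x + xt)) - (1 / 2 : ℝ) • f xt)
      ∧ ∀ h : ℝ,
          (xt - x = h • (B x xt + (1 / 2 : ℝ) • L (x + xt) + c)
            ↔ xt - x = h • (-((1 / 2 : ℝ) • f x) + (2 : ℝ) • f ((1 / 2 : ℝ) • (x + xt))
                - (1 / 2 : ℝ) • f xt)) := by
  intro x xt
  have key : B x xt + (1 / 2 : ℝ) • L (x + xt) + c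
      = -((1 / 2 : ℝ) • f x) + (2 : ℝ) • f ((1 / 2 : ℝ) • (x + xt)) - (1 / 2 : ℝ) • f xt := by
    simp only [hf, map_add, map_smul, LinearMap.add_apply, LinearMap.smul_apply]
    rw [hB xt x]
    module
  exact ⟨key, fun h => by rw [key]⟩
end

section
/- Let f(x) = B(x,x) + Lx + c be a quadratic vector field on ℝ^N, and let ℓ : ℝ^N → ℝ be a linear functional such that ℓ(f(x)) = 0 for all x ∈ ℝ^N (i.e., ℓ is a linear first integral of ẋ = f(x)). If x, x̃ ∈ ℝ^N satisfy the Kahan relation (x̃ − x)/h = B(x, x̃) + (1/2)L(x + x̃) + c for some h ∈ ℝ, then ℓ(x̃) = ℓ(x). Thus Kahan's method preserves all linear first integrals. -/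
/-- Kahan's method preserves linear first integrals: if `ℓ` is a linear functional
with `ℓ (f x) = 0` for all `x`, where `f x = B x x + L x + c` is quadratic, and `x, x̃`
satisfy the Kahan relation `x̃ - x = h (B x x̃ + (1/2) L (x + x̃) + c)`, then `ℓ x̃ = ℓ x`. -/
theorem kahan_preserves_linear_first_integrals (N : ℕ) (h : ℝ)
    (B : (Fin N → ℝ) →ₗ[ℝ] (Fin N → ℝ) →ₗ[ℝ] (Fin N → ℝ))
    (hB : ∀ u v, B u v = B v u)
    (L : (Fin N → ℝ) →ₗ[ℝ] (Fin N → ℝ)) (c : Fin N → ℝ)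
    (f : (Fin N → ℝ) → (Fin N → ℝ)) (hf : ∀ x, f x = B x x + L x + c)
    (ℓ : (Fin N → ℝ) →ₗ[ℝ] ℝ) (hfirst : ∀ x, ℓ (f x) = 0)
    (x xt : Fin N → ℝ)
    (hrel : xt - x = h • (B x xt + (1 / 2 : ℝ) • L (x + xt) + c)) :
    ℓ xt = ℓ x := by
  have h1 := hfirst x
  have h2 := hfirst xt
  have h3 := hfirst ((1/2:ℝ) • (x + xt))
  have hkey := congrArg ℓ hrel
  simp only [hf, map_add, map_smul, map_sub, LinearMap.map_smul₂, LinearMap.smul_apply,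
    LinearMap.add_apply, hB xt x, smul_eq_mul] at h1 h2 h3 hkey
  have hz : ℓ ((B x) xt) + 1 / 2 * (ℓ (L x) + ℓ (L xt)) + ℓ c = 0 := by linarith
  rw [hz, mul_zero] at hkey
  linarith
end

section
/- Let U ⊆ ℝ² be an open set on which differentiable functions x̃(x,y), ỹ(x,y) satisfy Kahan's discretization of the Lotka–Volterra system: (x̃ − x)/h = (1/2)(x̃ + x − (x̃y + xỹ)) and (ỹ − y)/h = (1/2)(x̃y + xỹ − (ỹ + y)), for a fixed h ∈ ℝ. Assume that at each point of U the 2×2 matrix of partial derivatives of the two defining relations with respect to (x̃, ỹ) is invertible, and that xy ≠ 0 on U. Then the Jacobian determinant of the map φ : (x,y) ↦ (x̃, ỹ) satisfies det φ'(x,y) = (x̃ ỹ)/(x y) at every point of U; that is, φ preserves the symplectic form ω = (1/(xy)) dx ∧ dy. -/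
private lemma det_eq_fin_two (L : ℝ × ℝ →L[ℝ] ℝ × ℝ) :
    L.det = (L (1,0)).1 * (L (0,1)).2 - (L (0,1)).1 * (L (1,0)).2 := by
  rw [ContinuousLinearMap.det, ← LinearMap.det_toMatrix (Module.Basis.finTwoProd ℝ),
    Matrix.det_fin_two]
  simp [LinearMap.toMatrix_apply, Module.Basis.finTwoProd_zero, Module.Basis.finTwoProd_one,
    Module.Basis.coe_finTwoProd_repr]

/-- Kahan's discretization of the Lotka–Volterra system is symplectic: if on an open
set `U` a differentiable map `φ : (x,y) ↦ (x̃,ỹ)` satisfies the Kahan relations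
`x̃ - x = (h/2)(x̃ + x - (x̃y + xỹ))`, `ỹ - y = (h/2)(x̃y + xỹ - (ỹ + y))`, the 2×2
matrix of partial derivatives of the defining relations with respect to `(x̃,ỹ)` is
invertible on `U`, and `xy ≠ 0` on `U`, then `det φ'(x,y) = x̃ỹ/(xy)` on `U`, i.e.
`φ` preserves the symplectic form `ω = (1/(xy)) dx ∧ dy`. -/
theorem kahan_lotka_volterra_symplectic (h : ℝ) (U : Set (ℝ × ℝ)) (hU : IsOpen U)
    (φ : ℝ × ℝ → ℝ × ℝ)
    (hrel : ∀ p ∈ U,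
      (φ p).1 - p.1 = (h / 2) * ((φ p).1 + p.1 - ((φ p).1 * p.2 + p.1 * (φ p).2)) ∧
      (φ p).2 - p.2 = (h / 2) * ((φ p).1 * p.2 + p.1 * (φ p).2 - ((φ p).2 + p.2)))
    (hdiff : ∀ p ∈ U, DifferentiableAt ℝ φ p)
    (hmat : ∀ p ∈ U,
      (!![1 - (h / 2) * (1 - p.2), (h / 2) * p.1;
          -((h / 2) * p.2), 1 - (h / 2) * (p.1 - 1)] : Matrix (Fin 2) (Fin 2) ℝ).det ≠ 0)
    (hxy : ∀ p ∈ U, p.1 * p.2 ≠ 0) :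
    ∀ p ∈ U, (fderiv ℝ φ p).det = (φ p).1 * (φ p).2 / (p.1 * p.2) := by
  intro p hp
  obtain ⟨r1, r2⟩ := hrel p hp
  have hφ := (hdiff p hp).hasFDerivAt
  set L := fderiv ℝ φ p with hL
  have hX := hφ.fst
  have hY := hφ.snd
  have hfst : HasFDerivAt (fun q : ℝ × ℝ => q.1) (ContinuousLinearMap.fst ℝ ℝ ℝ) p :=
    hasFDerivAt_fst
  have hsnd : HasFDerivAt (fun q : ℝ × ℝ => q.2) (ContinuousLinearMap.snd ℝ ℝ ℝ) p :=
    hasFDerivAt_snd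
  -- first Kahan relation, differentiated
  have hg1 := (hX.sub hfst).sub
    (((hX.add hfst).sub ((hX.mul hsnd).add (hfst.mul hY))).const_mul (h/2))
  have hz1 : HasFDerivAt (fun q : ℝ × ℝ => ((φ q).1 - q.1) -
      (h/2) * ((φ q).1 + q.1 - ((φ q).1 * q.2 + q.1 * (φ q).2)))
      (0 : ℝ × ℝ →L[ℝ] ℝ) p := by
    refine (hasFDerivAt_const (0:ℝ) p).congr_of_eventuallyEq ?_
    filter_upwards [hU.mem_nhds hp] with q hq
    have := (hrel q hq).1; linarith
  have hD1 := hz1.unique hg1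
  -- second Kahan relation, differentiated
  have hg2 := (hY.sub hsnd).sub
    ((((hX.mul hsnd).add (hfst.mul hY)).sub (hY.add hsnd)).const_mul (h/2))
  have hz2 : HasFDerivAt (fun q : ℝ × ℝ => ((φ q).2 - q.2) -
      (h/2) * (((φ q).1 * q.2 + q.1 * (φ q).2) - ((φ q).2 + q.2)))
      (0 : ℝ × ℝ →L[ℝ] ℝ) p := by
    refine (hasFDerivAt_const (0:ℝ) p).congr_of_eventuallyEq ?_
    filter_upwards [hU.mem_nhds hp] with q hq
    have := (hrel q hq).2; linarith
  have hD2 := hz2.unique hg2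
  have e1 := congrArg (fun T : ℝ × ℝ →L[ℝ] ℝ => T (1,0)) hD1
  have e2 := congrArg (fun T : ℝ × ℝ →L[ℝ] ℝ => T (0,1)) hD1
  have e3 := congrArg (fun T : ℝ × ℝ →L[ℝ] ℝ => T (1,0)) hD2
  have e4 := congrArg (fun T : ℝ × ℝ →L[ℝ] ℝ => T (0,1)) hD2
  simp at e1 e2 e3 e4
  have hA := hmat p hp
  rw [Matrix.det_fin_two_of] at hA
  have hxy0 := hxy p hp
  rw [det_eq_fin_two, eq_div_iff hxy0]
  refine mul_left_cancel₀ hA ?_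
  linear_combination
    (-(p.1 * p.2 * (-(h/2*p.2) * (L (0,1)).1 + (1 - h/2*(p.1-1)) * (L (0,1)).2))) * e1 +
    (p.1 * p.2 * (-(h/2*p.2) * (L (1,0)).1 + (1 - h/2*(p.1-1)) * (L (1,0)).2)) * e2 +
    (p.1 * p.2 * (-(h/2 * (φ p).1))) * e3 +
    (-(p.1 * p.2 * (1 + h/2*(1 - (φ p).2)))) * e4 +
    (-((φ p).2 * (1 + h/2 - h/2*p.1))) * r1 +
    (-(p.1 * (1 + h/2 - h/2*(φ p).2))) * r2
end

section
/- Let h ∈ ℝ. Mickens' discrete predator–prey system (x̃ − x)/h = 2x − x̃ − x̃y, (ỹ − y)/h = −ỹ + 2x̃y − x̃ỹ has the unique explicit solution x̃ = x(1 + 2h)/(1 + h + hy), ỹ = y(1 + 2h x̃)/(1 + h + h x̃) whenever the denominators are nonzero, so it defines a birational map φ : (x,y) ↦ (x̃,ỹ) of the plane; moreover, on the open set where φ is defined and differentiable with xy ≠ 0, its Jacobian determinant satisfies det φ'(x,y) = (x̃ỹ)/(xy), i.e., φ preserves the symplectic form ω = (1/(xy)) dx ∧ dy. -/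
open ContinuousLinearMap in
private lemma mickens_det_clm (L : ℝ×ℝ →L[ℝ] ℝ×ℝ) :
    L.det = (L (1,0)).1 * (L (0,1)).2 - (L (1,0)).2 * (L (0,1)).1 := by
  rw [ContinuousLinearMap.det,
    ← LinearMap.det_toMatrix (Module.Basis.finTwoProd ℝ), Matrix.det_fin_two]
  simp [LinearMap.toMatrix_apply, Module.Basis.finTwoProd_zero, Module.Basis.finTwoProd_one]
  ring

open ContinuousLinearMap in
private lemma mickens_hasFDerivAt_div {E : Type*} [NormedAddCommGroup E] [NormedSpace ℝ E]
    {f g : E → ℝ} {f' g' : E →L[ℝ] ℝ} {x : E}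
    (hf : HasFDerivAt f f' x) (hg : HasFDerivAt g g' x) (hx : g x ≠ 0) :
    HasFDerivAt (fun y => f y / g y)
      ((1 / (g x) ^ 2) • ((g x) • f' - (f x) • g')) x := by
  have hinv : HasFDerivAt (fun y => (g y)⁻¹) ((-((g x)⁻¹ ^ 2)) • g') x := by
    have := (hasFDerivAt_inv' (𝕜 := ℝ) hx).comp x hg
    refine this.congr_fderiv ?_
    ext v
    simp [mulLeftRight_apply]
    ring
  have hmul := hf.mul hinv
  have heq : (fun y => f y / g y) = fun y => f y * (g y)⁻¹ := by
    funext y; rw [div_eq_mul_inv]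
  rw [heq]
  refine hmul.congr_fderiv ?_
  ext v
  simp
  field_simp
  ring

private lemma mickens_hred (A B g w R : ℝ) (ha : A * w = R) :
    A * (g * B + w * 1) - (g * A + w * 0) * B = R := by rw [← ha]; ring

private lemma mickens_arith (h x y : ℝ) (h1 : 1 + h + h * y ≠ 0)
    (h2 : 1 + h + h * (x * (1 + 2 * h) / (1 + h + h * y)) ≠ 0)
    (hx : x ≠ 0) (hy : y ≠ 0) :
    1 / (1 + h + h * y) ^ 2 * ((1 + h + h * y) * ((1 + 2 * h) * 1) - x * (1 + 2 * h) * (h * 0)) *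
      (1 / (1 + h + h * (x * (1 + 2 * h) / (1 + h + h * y))) ^ 2 *
        ((1 + h + h * (x * (1 + 2 * h) / (1 + h + h * y))) *
          (1 + 2 * h * (x * (1 + 2 * h) / (1 + h + h * y)))))
    = x * (1 + 2 * h) / (1 + h + h * y) *
        (y * (1 + 2 * h * (x * (1 + 2 * h) / (1 + h + h * y))) /
          (1 + h + h * (x * (1 + 2 * h) / (1 + h + h * y)))) /
      (x * y) := by
  have hrw : 1 + h + h * (x * (1 + 2 * h) / (1 + h + h * y))
      = ((1 + h) * (1 + h + h * y) + h * (x * (1 + 2 * h))) / (1 + h + h * y) := by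
    field_simp
  have hrw2 : 1 + 2 * h * (x * (1 + 2 * h) / (1 + h + h * y))
      = ((1 + h + h * y) + 2 * h * (x * (1 + 2 * h))) / (1 + h + h * y) := by
    field_simp
  have h3 : (1 + h) * (1 + h + h * y) + h * (x * (1 + 2 * h)) ≠ 0 := by
    intro hc
    exact h2 (by rw [hrw, hc, zero_div])
  rw [hrw, hrw2]
  field_simp
  ring

/-- The explicit rational map defined by Mickens' discrete predator–prey system:
`x̃ = x(1+2h)/(1+h+hy)`, `ỹ = y(1+2hx̃)/(1+h+hx̃)`. -/
noncomputable def mickensMap (h : ℝ) : ℝ × ℝ → ℝ × ℝ := fun p =>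
  let xt := p.1 * (1 + 2 * h) / (1 + h + h * p.2)
  (xt, p.2 * (1 + 2 * h * xt) / (1 + h + h * xt))

open ContinuousLinearMap in
set_option maxHeartbeats 1000000 in
/-- Mickens' discrete predator–prey system `(x̃-x)/h = 2x - x̃ - x̃y`,
`(ỹ-y)/h = -ỹ + 2x̃y - x̃ỹ` has the unique explicit solution
`x̃ = x(1+2h)/(1+h+hy)`, `ỹ = y(1+2hx̃)/(1+h+hx̃)` whenever the denominators are
nonzero, so it defines a birational map `φ` of the plane; moreover, where `φ` is
defined and differentiable with `xy ≠ 0`, its Jacobian determinant satisfies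
`det φ'(x,y) = x̃ỹ/(xy)`, i.e. `φ` preserves `ω = (1/(xy)) dx ∧ dy`. -/
theorem mickens_birational_symplectic (h : ℝ) :
    (∀ x y xt yt : ℝ,
      1 + h + h * y ≠ 0 →
      1 + h + h * (x * (1 + 2 * h) / (1 + h + h * y)) ≠ 0 →
      ((xt - x = h * (2 * x - xt - xt * y) ∧
        yt - y = h * (-yt + 2 * xt * y - xt * yt)) ↔
       (xt = x * (1 + 2 * h) / (1 + h + h * y) ∧
        yt = y * (1 + 2 * h * xt) / (1 + h + h * xt))))
    ∧ (∀ p : ℝ × ℝ,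
        1 + h + h * p.2 ≠ 0 →
        1 + h + h * (mickensMap h p).1 ≠ 0 →
        p.1 * p.2 ≠ 0 →
        DifferentiableAt ℝ (mickensMap h) p ∧
        (fderiv ℝ (mickensMap h) p).det
          = (mickensMap h p).1 * (mickensMap h p).2 / (p.1 * p.2)) := by
  constructor
  · intro x y xt yt hd1 hd2
    constructor
    · rintro ⟨e1, e2⟩
      have hxt : xt = x * (1 + 2 * h) / (1 + h + h * y) := by
        field_simp
        linear_combination e1
      rw [← hxt] at hd2
      refine ⟨hxt, ?_⟩
      field_simp
      linear_combination e2
    · rintro ⟨hxt, hyt⟩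
      rw [← hxt] at hd2
      have e1 : xt * (1 + h + h * y) = x * (1 + 2 * h) := by
        rw [hxt]; field_simp
      have e2 : yt * (1 + h + h * xt) = y * (1 + 2 * h * xt) := by
        rw [hyt]; field_simp
      constructor
      · linear_combination e1
      · linear_combination e2
  · intro p hd1 hd2 hxy
    have hx : p.1 ≠ 0 := fun c => hxy (by rw [c]; ring)
    have hy : p.2 ≠ 0 := fun c => hxy (by rw [c]; ring)
    set f1 : ℝ × ℝ → ℝ := fun q => q.1 * (1 + 2 * h) / (1 + h + h * q.2) with hf1
    have hxt : (mickensMap h p).1 = f1 p := rfl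
    rw [hxt] at hd2
    have hnum1 : HasFDerivAt (fun q : ℝ × ℝ => q.1 * (1 + 2 * h))
        ((1 + 2 * h) • fst ℝ ℝ ℝ) p := hasFDerivAt_fst.mul_const _
    have hden1 : HasFDerivAt (fun q : ℝ × ℝ => 1 + h + h * q.2)
        (h • snd ℝ ℝ ℝ) p := (hasFDerivAt_snd.const_mul h).const_add (1 + h)
    set L1 : ℝ × ℝ →L[ℝ] ℝ :=
      (1 / (1 + h + h * p.2) ^ 2) •
        ((1 + h + h * p.2) • ((1 + 2 * h) • fst ℝ ℝ ℝ)
          - (p.1 * (1 + 2 * h)) • (h • snd ℝ ℝ ℝ)) with hL1def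
    have hL1 : HasFDerivAt f1 L1 p := mickens_hasFDerivAt_div hnum1 hden1 hd1
    have hg1 : HasFDerivAt (fun q => 1 + 2 * h * f1 q) ((2 * h) • L1) p :=
      (hL1.const_mul (2 * h)).const_add 1
    have hnum2 : HasFDerivAt (fun q : ℝ × ℝ => q.2 * (1 + 2 * h * f1 q))
        (p.2 • ((2 * h) • L1) + (1 + 2 * h * f1 p) • snd ℝ ℝ ℝ) p :=
      hasFDerivAt_snd.mul hg1
    have hden2 : HasFDerivAt (fun q => 1 + h + h * f1 q) (h • L1) p :=
      (hL1.const_mul h).const_add (1 + h)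
    set L2 : ℝ × ℝ →L[ℝ] ℝ :=
      (1 / (1 + h + h * f1 p) ^ 2) •
        ((1 + h + h * f1 p) • (p.2 • ((2 * h) • L1) + (1 + 2 * h * f1 p) • snd ℝ ℝ ℝ)
          - (p.2 * (1 + 2 * h * f1 p)) • (h • L1)) with hL2def
    have hL2 : HasFDerivAt (fun q : ℝ × ℝ => q.2 * (1 + 2 * h * f1 q) / (1 + h + h * f1 q))
        L2 p := mickens_hasFDerivAt_div hnum2 hden2 hd2
    have hF : HasFDerivAt (mickensMap h) (L1.prod L2) p := hL1.prodMk hL2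
    refine ⟨hF.differentiableAt, ?_⟩
    rw [hF.fderiv, mickens_det_clm]
    have hf1p : f1 p = p.1 * (1 + 2 * h) / (1 + h + h * p.2) := rfl
    have hm : mickensMap h p = (f1 p, p.2 * (1 + 2 * h * f1 p) / (1 + h + h * f1 p)) := rfl
    clear_value f1 L1 L2
    have hL2v : ∀ v : ℝ × ℝ, L2 v =
        ((1 / (1 + h + h * f1 p) ^ 2) *
            ((1 + h + h * f1 p) * (p.2 * (2 * h)) - p.2 * (1 + 2 * h * f1 p) * h)) * L1 v
          + ((1 / (1 + h + h * f1 p) ^ 2) * ((1 + h + h * f1 p) * (1 + 2 * h * f1 p))) * v.2 := by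
      intro v
      simp only [hL2def, smul_apply, sub_apply, add_apply, coe_snd', smul_eq_mul]
      ring
    have hL1v : ∀ v : ℝ × ℝ, L1 v =
        (1 / (1 + h + h * p.2) ^ 2) *
          ((1 + h + h * p.2) * ((1 + 2 * h) * v.1) - p.1 * (1 + 2 * h) * (h * v.2)) := by
      intro v
      simp only [hL1def, smul_apply, sub_apply, coe_fst', coe_snd', smul_eq_mul]
    simp only [prod_apply]
    rw [hL2v (1,0), hL2v (0,1), hL1v (1,0), hL1v (0,1)]
    rw [hm]
    simp only [hf1p]
    rw [hf1p] at hd2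
    exact mickens_hred _ _ _ _ _ (mickens_arith h p.1 p.2 hd1 hd2 hx hy)
end

section
/- Consider the general discrete Lotka–Volterra system (x̃ − x)/h = a x + (1−a) x̃ − (b xy + c x̃ỹ + d xỹ + e x̃y), (ỹ − y)/h = −A y − (1−A) ỹ + (B xy + C x̃ỹ + D xỹ + E x̃y), with b + c + d + e = 1 = B + C + D + E and parameters independent of h. If b = 0 and either c + d = 1 or B = 0, then there exist rational functions S₁, S₂ ∈ ℝ(x̃, ỹ) such that, on a nonempty Zariski-open subset of the (x̃,ỹ)-plane, the unique solution of the system for the unshifted variables is x = S₁(x̃,ỹ), y = S₂(x̃,ỹ); i.e., the inverse map (x̃,ỹ) ↦ (x,y) is rational. -/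
/-- The general non-standard discretization of the Lotka–Volterra system
`ẋ = x(1-y)`, `ẏ = y(x-1)` with step `h` and parameter list `{a,b,c,d,e,A,B,C,D,E}`. -/
def lvSys (h a b c d e A B C D E x y xt yt : ℝ) : Prop :=
  xt - x = h * (a * x + (1 - a) * xt
      - (b * x * y + c * xt * yt + d * x * yt + e * xt * y)) ∧
  yt - y = h * (-(A * y) - (1 - A) * yt
      + (B * x * y + C * xt * yt + D * x * yt + E * xt * y))

private lemma poly_ne_zero_of_eval {p : MvPolynomial (Fin 2) ℝ} (pt : Fin 2 → ℝ)
    (h : MvPolynomial.eval pt p ≠ 0) : p ≠ 0 := fun h0 => h (by simp [h0])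


set_option maxHeartbeats 2000000 in
/-- If `b = 0` and either `c + d = 1` or `B = 0` (the vanishing of the leading
coefficient `p̃₂` of the quadratic obtained by eliminating `x`), then for all
sufficiently small nonzero `h` the inverse map of the general discrete Lotka–Volterra
system is rational: there are rational functions `S₁ = S₁'/T₁`, `S₂ = S₂'/T₂` in
`(x̃,ỹ)` such that on a nonempty Zariski-open subset of the `(x̃,ỹ)`-plane the unique
solution of the system for the unshifted variables is `x = S₁(x̃,ỹ)`, `y = S₂(x̃,ỹ)`. -/
theorem lv_backward_rational (a b c d e A B C D E : ℝ)
    (hcon1 : b + c + d + e = 1) (hcon2 : B + C + D + E = 1)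
    (hb : b = 0) (hcdB : c + d = 1 ∨ B = 0) :
    ∃ h₀ : ℝ, 0 < h₀ ∧ ∀ h : ℝ, h ≠ 0 → |h| < h₀ →
      ∃ S₁ T₁ S₂ T₂ W : MvPolynomial (Fin 2) ℝ, W ≠ 0 ∧
        ∀ xt yt : ℝ, MvPolynomial.eval ![xt, yt] W ≠ 0 →
          MvPolynomial.eval ![xt, yt] T₁ ≠ 0 ∧
          MvPolynomial.eval ![xt, yt] T₂ ≠ 0 ∧
          ∀ x y : ℝ,
            lvSys h a b c d e A B C D E x y xt yt ↔
              (x = MvPolynomial.eval ![xt, yt] S₁ / MvPolynomial.eval ![xt, yt] T₁ ∧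
               y = MvPolynomial.eval ![xt, yt] S₂ / MvPolynomial.eval ![xt, yt] T₂) := by
  have hK : (0:ℝ) < 1 + |a| + |A| := by positivity
  refine ⟨1 / (1 + |a| + |A|), by positivity, ?_⟩
  intro h hne hh
  have hhK : |h| * (1 + |a| + |A|) < 1 := by
    rw [lt_div_iff₀ hK] at hh; linarith
  have h1a : (0:ℝ) < 1 + h * a := by
    have h1 : |h * a| < 1 := by
      rw [abs_mul]; nlinarith [abs_nonneg h, abs_nonneg a, abs_nonneg A]
    have := abs_lt.mp h1; linarith
  have h1A : (0:ℝ) < 1 - h * A := by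
    have h1 : |h * A| < 1 := by
      rw [abs_mul]; nlinarith [abs_nonneg h, abs_nonneg a, abs_nonneg A]
    have := abs_lt.mp h1; linarith
  subst hb
  rcases hcdB with hcd | hB
  · -- case e = 0
    have he : e = 0 := by linarith
    subst he
    set P : MvPolynomial (Fin 2) ℝ :=
      MvPolynomial.C (1 + h*a) - MvPolynomial.C (h*d) * MvPolynomial.X 1 with hP
    set r1 : MvPolynomial (Fin 2) ℝ :=
      MvPolynomial.C (1 - h*(1-a)) * MvPolynomial.X 0
        + MvPolynomial.C (h*c) * MvPolynomial.X 0 * MvPolynomial.X 1 with hr1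
    set T2 : MvPolynomial (Fin 2) ℝ :=
      P * (MvPolynomial.C (1 - h*A) + MvPolynomial.C (h*E) * MvPolynomial.X 0)
        + MvPolynomial.C (h*B) * r1 with hT2
    set S2 : MvPolynomial (Fin 2) ℝ :=
      MvPolynomial.X 1 *
        (P * (MvPolynomial.C (1 + h*(1-A)) - MvPolynomial.C (h*C) * MvPolynomial.X 0)
          - MvPolynomial.C (h*D) * r1) with hS2
    refine ⟨r1, P, S2, T2, P * T2, ?_, ?_⟩
    · apply poly_ne_zero_of_eval ![0, 0]
      simp only [hP, hr1, hT2, map_add, map_sub, map_mul, MvPolynomial.eval_C,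
        MvPolynomial.eval_X, Matrix.cons_val_zero, Matrix.cons_val_one, Matrix.head_cons]
      simp only [mul_zero, zero_mul, sub_zero, add_zero, zero_add]
      positivity
    · intro xt yt hW
      rw [map_mul] at hW
      obtain ⟨hPe, hT2e⟩ := mul_ne_zero_iff.mp hW
      refine ⟨hPe, hT2e, ?_⟩
      simp only [hP, hr1, hT2, hS2, map_add, map_sub, map_mul, MvPolynomial.eval_C,
        MvPolynomial.eval_X, Matrix.cons_val_zero, Matrix.cons_val_one,
        Matrix.head_cons] at hPe hT2e ⊢
      intro x y
      simp only [lvSys]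
      constructor
      · rintro ⟨h1, h2⟩
        have E1 : x * (1 + h*a - h*d*yt) = xt*(1-h*(1-a)) + h*c*xt*yt := by
          linear_combination -h1
        constructor
        · rw [eq_div_iff hPe]; linear_combination E1
        · rw [eq_div_iff hT2e]
          linear_combination (-(1 + h*a - h*d*yt)) * h2 - (h*B*y + h*D*yt) * E1
      · rintro ⟨hx, hy⟩
        rw [eq_div_iff hPe] at hx
        rw [eq_div_iff hT2e] at hy
        refine ⟨mul_right_cancel₀ hPe ?_,
          mul_right_cancel₀ (mul_ne_zero hPe hT2e) ?_⟩
        · linear_combination (-(1 + h*a - h*d*yt)) * hx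
        · linear_combination
            (-((1 - h*A + h*B*x + h*E*xt) * (1 + h*a - h*d*yt))) * hy
            + (-(h*B*(yt*((1 + h*a - h*d*yt)*(1 + h*(1-A) - h*C*xt)
                    - h*D*((1 - h*(1-a))*xt + h*c*xt*yt)))
               + h*D*yt*((1 + h*a - h*d*yt)*(1 - h*A + h*E*xt)
                    + h*B*((1 - h*(1-a))*xt + h*c*xt*yt)))) * hx
  · -- case B = 0
    subst hB
    set P : MvPolynomial (Fin 2) ℝ :=
      MvPolynomial.C (1 + h*a) - MvPolynomial.C (h*d) * MvPolynomial.X 1 with hP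
    set Q : MvPolynomial (Fin 2) ℝ := -(MvPolynomial.C (h*e) * MvPolynomial.X 0) with hQ
    set R : MvPolynomial (Fin 2) ℝ := MvPolynomial.C (h*D) * MvPolynomial.X 1 with hR
    set Sc : MvPolynomial (Fin 2) ℝ :=
      MvPolynomial.C (1 - h*A) + MvPolynomial.C (h*E) * MvPolynomial.X 0 with hSc
    set r1 : MvPolynomial (Fin 2) ℝ :=
      MvPolynomial.C (1 - h*(1-a)) * MvPolynomial.X 0
        + MvPolynomial.C (h*c) * MvPolynomial.X 0 * MvPolynomial.X 1 with hr1
    set r2 : MvPolynomial (Fin 2) ℝ :=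
      MvPolynomial.C (1 + h*(1-A)) * MvPolynomial.X 1
        - MvPolynomial.C (h*C) * MvPolynomial.X 0 * MvPolynomial.X 1 with hr2
    set Det : MvPolynomial (Fin 2) ℝ := P * Sc - Q * R with hDet
    refine ⟨r1 * Sc - Q * r2, Det, P * r2 - R * r1, Det, Det, ?_, ?_⟩
    · apply poly_ne_zero_of_eval ![0, 0]
      simp only [hDet, hP, hQ, hR, hSc, map_add, map_sub, map_mul, map_neg,
        MvPolynomial.eval_C, MvPolynomial.eval_X, Matrix.cons_val_zero,
        Matrix.cons_val_one, Matrix.head_cons]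
      simp only [mul_zero, zero_mul, sub_zero, add_zero, zero_add, neg_zero]
      positivity
    · intro xt yt hW
      refine ⟨hW, hW, ?_⟩
      simp only [hDet, hP, hQ, hR, hSc, hr1, hr2, map_add, map_sub, map_mul, map_neg,
        MvPolynomial.eval_C, MvPolynomial.eval_X, Matrix.cons_val_zero,
        Matrix.cons_val_one, Matrix.head_cons] at hW ⊢
      intro x y
      simp only [lvSys]
      constructor
      · rintro ⟨h1, h2⟩
        have E1 : x * (1 + h*a - h*d*yt) - h*e*xt*y
            = xt*(1-h*(1-a)) + h*c*xt*yt := by linear_combination -h1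
        have E2 : y * (1 - h*A + h*E*xt) + h*D*yt*x
            = yt*(1+h*(1-A)) - h*C*xt*yt := by linear_combination -h2
        constructor
        · rw [eq_div_iff hW]
          linear_combination (1 - h*A + h*E*xt) * E1 + (h*e*xt) * E2
        · rw [eq_div_iff hW]
          linear_combination (1 + h*a - h*d*yt) * E2 - (h*D*yt) * E1
      · rintro ⟨hx, hy⟩
        rw [eq_div_iff hW] at hx
        rw [eq_div_iff hW] at hy
        refine ⟨mul_right_cancel₀ hW ?_, mul_right_cancel₀ hW ?_⟩
        · linear_combination (-(1 + h*a - h*d*yt)) * hx + (h*e*xt) * hy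
        · linear_combination (-(1 - h*A + h*E*xt)) * hy + (-(h*D*yt)) * hx
end

section
/- The general discrete Lotka–Volterra system (x̃ − x)/h = a x + (1−a) x̃ − (b xy + c x̃ỹ + d xỹ + e x̃y), (ỹ − y)/h = −A y − (1−A) ỹ + (B xy + C x̃ỹ + D xỹ + E x̃y), with constraints b + c + d + e = 1 = B + C + D + E and parameters independent of h, defines a birational map of the plane (for all sufficiently small h ≠ 0) if and only if the parameters {a,b,c,d,e,A,B,C,D,E} belong to one of the following seven families: (i) {a,0,0,d,e,A,0,0,D,E} with d+e = 1 = D+E; (ii) {a,0,0,1,0,A,B,0,D,E} with B+D+E = 1; (iii) {a,0,0,0,1,A,0,C,D,E} with C+D+E = 1; (iv) {a,b,0,d,e,A,0,0,0,1} with b+d+e = 1; (v) {a,0,c,d,e,A,0,0,1,0} with c+d+e = 1; (vi) {a,0,c,d,0,A,B,0,D,0} with c+d = 1 = B+D; (vii) {a,b,0,0,e,A,0,C,0,E} with b+e = 1 = C+E. -/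
/-- The forward map `(x,y) ↦ (x̃,ỹ)` of the discrete system is rational: on a
nonempty Zariski-open subset of the `(x,y)`-plane the system has the unique solution
`x̃ = P₁/Q₁`, `ỹ = P₂/Q₂` for some polynomials. -/
def lvForwardRational (h a b c d e A B C D E : ℝ) : Prop :=
  ∃ P₁ Q₁ P₂ Q₂ W : MvPolynomial (Fin 2) ℝ, W ≠ 0 ∧
    ∀ x y : ℝ, MvPolynomial.eval ![x, y] W ≠ 0 →
      MvPolynomial.eval ![x, y] Q₁ ≠ 0 ∧
      MvPolynomial.eval ![x, y] Q₂ ≠ 0 ∧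
      ∀ xt yt : ℝ,
        lvSys h a b c d e A B C D E x y xt yt ↔
          (xt = MvPolynomial.eval ![x, y] P₁ / MvPolynomial.eval ![x, y] Q₁ ∧
           yt = MvPolynomial.eval ![x, y] P₂ / MvPolynomial.eval ![x, y] Q₂)

/-- The inverse map `(x̃,ỹ) ↦ (x,y)` of the discrete system is rational: on a
nonempty Zariski-open subset of the `(x̃,ỹ)`-plane the system has the unique solution
`x = S₁/T₁`, `y = S₂/T₂` for some polynomials. -/
def lvBackwardRational (h a b c d e A B C D E : ℝ) : Prop :=
  ∃ S₁ T₁ S₂ T₂ W : MvPolynomial (Fin 2) ℝ, W ≠ 0 ∧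
    ∀ xt yt : ℝ, MvPolynomial.eval ![xt, yt] W ≠ 0 →
      MvPolynomial.eval ![xt, yt] T₁ ≠ 0 ∧
      MvPolynomial.eval ![xt, yt] T₂ ≠ 0 ∧
      ∀ x y : ℝ,
        lvSys h a b c d e A B C D E x y xt yt ↔
          (x = MvPolynomial.eval ![xt, yt] S₁ / MvPolynomial.eval ![xt, yt] T₁ ∧
           y = MvPolynomial.eval ![xt, yt] S₂ / MvPolynomial.eval ![xt, yt] T₂)

open MvPolynomial

set_option maxHeartbeats 1000000

noncomputable def pP (h a e : ℝ) : MvPolynomial (Fin 2) ℝ :=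
  MvPolynomial.C (1 - h*(1-a)) + MvPolynomial.C (h*e) * X 1
noncomputable def qP (h a b : ℝ) : MvPolynomial (Fin 2) ℝ :=
  MvPolynomial.C (1 + h*a) * X 0 - MvPolynomial.C (h*b) * (X 0 * X 1)
noncomputable def rP (h A D : ℝ) : MvPolynomial (Fin 2) ℝ :=
  MvPolynomial.C (1 + h*(1-A)) - MvPolynomial.C (h*D) * X 0
noncomputable def sP (h A B : ℝ) : MvPolynomial (Fin 2) ℝ :=
  MvPolynomial.C (1 - h*A) * X 1 + MvPolynomial.C (h*B) * (X 0 * X 1)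

@[simp] lemma eval_pP (h a e x y : ℝ) :
    MvPolynomial.eval ![x, y] (pP h a e) = 1 - h*(1-a) + h*e*y := by simp [pP]
@[simp] lemma eval_qP (h a b x y : ℝ) :
    MvPolynomial.eval ![x, y] (qP h a b) = (1 + h*a) * x - h*b*(x*y) := by simp [qP]
@[simp] lemma eval_rP (h A D x y : ℝ) :
    MvPolynomial.eval ![x, y] (rP h A D) = 1 + h*(1-A) - h*D*x := by simp [rP]
@[simp] lemma eval_sP (h A B x y : ℝ) :
    MvPolynomial.eval ![x, y] (sP h A B) = (1 - h*A) * y + h*B*(x*y) := by simp [sP]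

/-- Family shape L1: `C = E = 0`. -/
lemma forward_L1 {h a b c d e A B C D E : ℝ} (hC : C = 0) (hE : E = 0)
    (h1 : 1 - h*(1-a) ≠ 0) (h2 : 1 + h*(1-A) ≠ 0) :
    lvForwardRational h a b c d e A B C D E := by
  subst hC hE
  refine ⟨qP h a b * rP h A D - MvPolynomial.C (h*d) * (X 0 * sP h A B),
          pP h a e * rP h A D + MvPolynomial.C (h*c) * sP h A B,
          sP h A B, rP h A D,
          (pP h a e * rP h A D + MvPolynomial.C (h*c) * sP h A B) * rP h A D, ?_, ?_⟩
  · intro h0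
    have hne : ((1 - h*(1-a) + h*e*0) * (1 + h*(1-A) - h*D*0)
        + h*c*((1 - h*A)*0 + h*B*(0*0))) * (1 + h*(1-A) - h*D*0) ≠ 0 := by
      have hprod := mul_ne_zero (mul_ne_zero h1 h2) h2
      intro heq; apply hprod; linear_combination heq
    apply hne
    have := congrArg (MvPolynomial.eval ![(0:ℝ), 0]) h0
    simp only [map_mul, map_add, map_sub, eval_pP, eval_qP, eval_rP, eval_sP,
      MvPolynomial.eval_C, MvPolynomial.eval_X, Matrix.cons_val_zero, Matrix.cons_val_one,
      Matrix.head_cons, map_zero] at this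
    linear_combination this
  · intro x y hxy
    rw [map_mul] at hxy
    have hQ1 : MvPolynomial.eval ![x, y] (pP h a e * rP h A D + MvPolynomial.C (h*c) * sP h A B) ≠ 0 :=
      fun h' => hxy (by rw [h', zero_mul])
    have hQ2 : MvPolynomial.eval ![x, y] (rP h A D) ≠ 0 :=
      fun h' => hxy (by rw [h', mul_zero])
    refine ⟨hQ1, hQ2, fun u v => ⟨fun hsys => ?_, fun hrat => ?_⟩⟩
    · obtain ⟨s1, s2⟩ := hsys
      simp only [map_mul, map_add, map_sub, eval_pP, eval_qP, eval_rP, eval_sP, MvPolynomial.eval_C, MvPolynomial.eval_X, Matrix.cons_val_zero, Matrix.cons_val_one, Matrix.head_cons] at hQ1 hQ2 ⊢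
      constructor
      · rw [eq_div_iff hQ1]
        linear_combination (1 + h*(1-A) - h*D*x) * s1 - (h*c*u + h*d*x) * s2
      · rw [eq_div_iff hQ2]
        linear_combination s2
    · obtain ⟨hu, hv⟩ := hrat
      simp only [map_mul, map_add, map_sub, eval_pP, eval_qP, eval_rP, eval_sP, MvPolynomial.eval_C, MvPolynomial.eval_X, Matrix.cons_val_zero, Matrix.cons_val_one, Matrix.head_cons] at hu hv hQ1 hQ2
      have E1 : u * ((1 - h*(1-a) + h*e*y) * (1 + h*(1-A) - h*D*x)
          + h*c*((1 - h*A)*y + h*B*(x*y)))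
          = ((1 + h*a)*x - h*b*(x*y)) * (1 + h*(1-A) - h*D*x)
            - h*d*(x*((1 - h*A)*y + h*B*(x*y))) := by
        rw [hu]; exact div_mul_cancel₀ _ hQ1
      have E2 : v * (1 + h*(1-A) - h*D*x) = (1 - h*A)*y + h*B*(x*y) := by
        rw [hv]; exact div_mul_cancel₀ _ hQ2
      have E1' : u * ((1 - h*(1-a) + h*e*y) + h*c*v) * (1 + h*(1-A) - h*D*x)
          = ((1 + h*a)*x - h*b*(x*y) - h*d*x*v) * (1 + h*(1-A) - h*D*x) := by
        linear_combination E1 + (h*c*u + h*d*x) * E2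
      have E1'' : u * ((1 - h*(1-a) + h*e*y) + h*c*v)
          = (1 + h*a)*x - h*b*(x*y) - h*d*x*v :=
        mul_right_cancel₀ hQ2 E1'
      exact ⟨by linear_combination E1'', by linear_combination E2⟩

/-- Family shape L2: `c = C = 0`. -/
lemma forward_L2 {h a b c d e A B C D E : ℝ} (hc : c = 0) (hC : C = 0)
    (h1 : 1 - h*(1-a) ≠ 0) (h2 : 1 + h*(1-A) ≠ 0) :
    lvForwardRational h a b c d e A B C D E := by
  subst hc hC
  refine ⟨qP h a b * rP h A D - MvPolynomial.C (h*d) * (X 0 * sP h A B),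
          pP h a e * rP h A D + MvPolynomial.C (h^2*d*E) * (X 0 * X 1),
          pP h a e * sP h A B + MvPolynomial.C (h*E) * (X 1 * qP h a b),
          pP h a e * rP h A D + MvPolynomial.C (h^2*d*E) * (X 0 * X 1),
          pP h a e * rP h A D + MvPolynomial.C (h^2*d*E) * (X 0 * X 1), ?_, ?_⟩
  · intro h0
    have hne : (1 - h*(1-a) + h*e*0) * (1 + h*(1-A) - h*D*0) + h^2*d*E*(0*0) ≠ 0 := by
      have hprod := mul_ne_zero h1 h2
      intro heq; apply hprod; linear_combination heq
    apply hne
    have := congrArg (MvPolynomial.eval ![(0:ℝ), 0]) h0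
    simp only [map_mul, map_add, map_sub, eval_pP, eval_qP, eval_rP, eval_sP, MvPolynomial.eval_C, MvPolynomial.eval_X, Matrix.cons_val_zero, Matrix.cons_val_one, Matrix.head_cons, map_zero] at this
    linear_combination this
  · intro x y hxy
    have hT : MvPolynomial.eval ![x, y]
        (pP h a e * rP h A D + MvPolynomial.C (h^2*d*E) * (X 0 * X 1)) ≠ 0 := hxy
    refine ⟨hT, hT, fun u v => ⟨fun hsys => ?_, fun hrat => ?_⟩⟩
    · obtain ⟨s1, s2⟩ := hsys
      simp only [map_mul, map_add, map_sub, eval_pP, eval_qP, eval_rP, eval_sP, MvPolynomial.eval_C, MvPolynomial.eval_X, Matrix.cons_val_zero, Matrix.cons_val_one, Matrix.head_cons] at hT ⊢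
      have E1 : u * (1 - h*(1-a) + h*e*y) = ((1 + h*a)*x - h*b*(x*y)) - h*d*x*v := by
        linear_combination s1
      have E2 : v * (1 + h*(1-A) - h*D*x) = ((1 - h*A)*y + h*B*(x*y)) + h*E*u*y := by
        linear_combination s2
      constructor
      · rw [eq_div_iff hT]
        linear_combination (1 + h*(1-A) - h*D*x) * E1 - (h*d*x) * E2
      · rw [eq_div_iff hT]
        linear_combination (1 - h*(1-a) + h*e*y) * E2 + (h*E*y) * E1
    · obtain ⟨hu, hv⟩ := hrat
      simp only [map_mul, map_add, map_sub, eval_pP, eval_qP, eval_rP, eval_sP, MvPolynomial.eval_C, MvPolynomial.eval_X, Matrix.cons_val_zero, Matrix.cons_val_one, Matrix.head_cons] at hu hv hxy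
      have hT' : (1 - h*(1-a) + h*e*y) * (1 + h*(1-A) - h*D*x) + h^2*d*E*(x*y) ≠ 0 := hxy
      have E1m : u * ((1 - h*(1-a) + h*e*y) * (1 + h*(1-A) - h*D*x) + h^2*d*E*(x*y))
          = ((1 + h*a)*x - h*b*(x*y)) * (1 + h*(1-A) - h*D*x)
            - h*d*(x*((1 - h*A)*y + h*B*(x*y))) := by
        rw [hu]; exact div_mul_cancel₀ _ hT'
      have E2m : v * ((1 - h*(1-a) + h*e*y) * (1 + h*(1-A) - h*D*x) + h^2*d*E*(x*y))
          = (1 - h*(1-a) + h*e*y) * ((1 - h*A)*y + h*B*(x*y))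
            + h*E*(y*((1 + h*a)*x - h*b*(x*y))) := by
        rw [hv]; exact div_mul_cancel₀ _ hT'
      constructor
      · have G1 : (u * (1 - h*(1-a) + h*e*y) - (((1 + h*a)*x - h*b*(x*y)) - h*d*x*v))
            * ((1 - h*(1-a) + h*e*y) * (1 + h*(1-A) - h*D*x) + h^2*d*E*(x*y)) = 0 := by
          linear_combination (1 - h*(1-a) + h*e*y) * E1m + (h*d*x) * E2m
        have := (mul_eq_zero.mp G1).resolve_right hT'
        linear_combination this
      · have G2 : (v * (1 + h*(1-A) - h*D*x) - (((1 - h*A)*y + h*B*(x*y)) + h*E*u*y))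
            * ((1 - h*(1-a) + h*e*y) * (1 + h*(1-A) - h*D*x) + h^2*d*E*(x*y)) = 0 := by
          linear_combination (1 + h*(1-A) - h*D*x) * E2m - (h*E*y) * E1m
        have := (mul_eq_zero.mp G2).resolve_right hT'
        linear_combination this

/-- Family shape L3: `c = d = 0`. -/
lemma forward_L3 {h a b c d e A B C D E : ℝ} (hc : c = 0) (hd : d = 0)
    (h1 : 1 - h*(1-a) ≠ 0) (h2 : 1 + h*(1-A) ≠ 0) :
    lvForwardRational h a b c d e A B C D E := by
  subst hc hd
  refine ⟨qP h a b, pP h a e,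
          sP h A B * pP h a e + MvPolynomial.C (h*E) * (X 1 * qP h a b),
          rP h A D * pP h a e - MvPolynomial.C (h*C) * qP h a b,
          pP h a e * (rP h A D * pP h a e - MvPolynomial.C (h*C) * qP h a b), ?_, ?_⟩
  · intro h0
    have hne : (1 - h*(1-a) + h*e*0) * ((1 + h*(1-A) - h*D*0) * (1 - h*(1-a) + h*e*0)
        - h*C*((1 + h*a)*0 - h*b*(0*0))) ≠ 0 := by
      have hprod := mul_ne_zero h1 (mul_ne_zero h2 h1)
      intro heq; apply hprod; linear_combination heq
    apply hne
    have := congrArg (MvPolynomial.eval ![(0:ℝ), 0]) h0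
    simp only [map_mul, map_add, map_sub, eval_pP, eval_qP, eval_rP, eval_sP, MvPolynomial.eval_C, MvPolynomial.eval_X, Matrix.cons_val_zero, Matrix.cons_val_one, Matrix.head_cons, map_zero] at this
    linear_combination this
  · intro x y hxy
    rw [map_mul] at hxy
    have hp : MvPolynomial.eval ![x, y] (pP h a e) ≠ 0 := fun h' => hxy (by rw [h', zero_mul])
    have hQ2 : MvPolynomial.eval ![x, y]
        (rP h A D * pP h a e - MvPolynomial.C (h*C) * qP h a b) ≠ 0 :=
      fun h' => hxy (by rw [h', mul_zero])
    refine ⟨hp, hQ2, fun u v => ⟨fun hsys => ?_, fun hrat => ?_⟩⟩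
    · obtain ⟨s1, s2⟩ := hsys
      simp only [map_mul, map_add, map_sub, eval_pP, eval_qP, eval_rP, eval_sP, MvPolynomial.eval_C, MvPolynomial.eval_X, Matrix.cons_val_zero, Matrix.cons_val_one, Matrix.head_cons] at hp hQ2 ⊢
      have E1 : u * (1 - h*(1-a) + h*e*y) = (1 + h*a)*x - h*b*(x*y) := by
        linear_combination s1
      constructor
      · rw [eq_div_iff hp]; linear_combination s1
      · rw [eq_div_iff hQ2]
        linear_combination (1 - h*(1-a) + h*e*y) * s2 + (h*(C*v+E*y)) * E1
    · obtain ⟨hu, hv⟩ := hrat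
      simp only [map_mul, map_add, map_sub, eval_pP, eval_qP, eval_rP, eval_sP, MvPolynomial.eval_C, MvPolynomial.eval_X, Matrix.cons_val_zero, Matrix.cons_val_one, Matrix.head_cons] at hu hv hp hQ2
      have E1m : u * (1 - h*(1-a) + h*e*y) = (1 + h*a)*x - h*b*(x*y) := by
        rw [hu]; exact div_mul_cancel₀ _ hp
      have E2m : v * ((1 + h*(1-A) - h*D*x) * (1 - h*(1-a) + h*e*y)
            - h*C*((1 + h*a)*x - h*b*(x*y)))
          = ((1 - h*A)*y + h*B*(x*y)) * (1 - h*(1-a) + h*e*y)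
            + h*E*(y*((1 + h*a)*x - h*b*(x*y))) := by
        rw [hv]; exact div_mul_cancel₀ _ hQ2
      constructor
      · linear_combination E1m
      · have G2 : (v * (1 + h*(1-A) - h*D*x) - (((1 - h*A)*y + h*B*(x*y))
              + h*u*(C*v + E*y))) * (1 - h*(1-a) + h*e*y) = 0 := by
          linear_combination E2m - h*(C*v + E*y) * E1m
        have := (mul_eq_zero.mp G2).resolve_right hp
        linear_combination this

lemma lvSys_swap {h a b c d e A B C D E x y xt yt : ℝ} :
    lvSys h a b c d e A B C D E x y xt yt ↔
      lvSys (-h) (1-a) c b e d (1-A) C B E D xt yt x y := by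
  constructor <;> rintro ⟨e1, e2⟩
  · exact ⟨by linear_combination -e1, by linear_combination -e2⟩
  · exact ⟨by linear_combination -e1, by linear_combination -e2⟩

lemma backward_of_forward_neg {h a b c d e A B C D E : ℝ}
    (hF : lvForwardRational (-h) (1-a) c b e d (1-A) C B E D) :
    lvBackwardRational h a b c d e A B C D E := by
  obtain ⟨P₁, Q₁, P₂, Q₂, W, hW, hmain⟩ := hF
  exact ⟨P₁, Q₁, P₂, Q₂, W, hW, fun xt yt hW' =>
    ⟨(hmain xt yt hW').1, (hmain xt yt hW').2.1,
     fun x y => lvSys_swap.trans ((hmain xt yt hW').2.2 x y)⟩⟩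

lemma forward_neg_of_backward {h a b c d e A B C D E : ℝ}
    (hB : lvBackwardRational h a b c d e A B C D E) :
    lvForwardRational (-h) (1-a) c b e d (1-A) C B E D := by
  obtain ⟨S₁, T₁, S₂, T₂, W, hW, hmain⟩ := hB
  exact ⟨S₁, T₁, S₂, T₂, W, hW, fun x y hW' =>
    ⟨(hmain x y hW').1, (hmain x y hW').2.1,
     fun xt yt => lvSys_swap.symm.trans ((hmain x y hW').2.2 xt yt)⟩⟩

lemma one_sub_ne {z : ℝ} (hz : |z| < 1) : 1 - z ≠ 0 := by
  rcases abs_lt.mp hz with ⟨h1, h2⟩; intro h; linarith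

lemma one_add_ne {z : ℝ} (hz : |z| < 1) : 1 + z ≠ 0 := by
  rcases abs_lt.mp hz with ⟨h1, h2⟩; intro h; linarith

lemma small_bounds {h a A : ℝ} (hh : |h| < 1/(1 + |a| + |1-a| + |A| + |1-A|)) :
    (1 - h*(1-a) ≠ 0 ∧ 1 + h*(1-A) ≠ 0) ∧ (1 + h*a ≠ 0 ∧ 1 - h*A ≠ 0) := by
  have hS : (0:ℝ) < 1 + |a| + |1-a| + |A| + |1-A| := by positivity
  have key : |h| * (1 + |a| + |1-a| + |A| + |1-A|) < 1 := by
    calc |h| * (1 + |a| + |1-a| + |A| + |1-A|)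
        < 1 / (1 + |a| + |1-a| + |A| + |1-A|) * (1 + |a| + |1-a| + |A| + |1-A|) := by
          exact mul_lt_mul_of_pos_right hh hS
      _ = 1 := by field_simp
  have hha : |h| ≥ 0 := abs_nonneg h
  have b1 : |h*(1-a)| < 1 := by
    rw [abs_mul]
    nlinarith [abs_nonneg (1-a), abs_nonneg a, abs_nonneg A, abs_nonneg (1-A)]
  have b2 : |h*(1-A)| < 1 := by
    rw [abs_mul]
    nlinarith [abs_nonneg (1-a), abs_nonneg a, abs_nonneg A, abs_nonneg (1-A)]
  have b3 : |h*a| < 1 := by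
    rw [abs_mul]
    nlinarith [abs_nonneg (1-a), abs_nonneg a, abs_nonneg A, abs_nonneg (1-A)]
  have b4 : |h*A| < 1 := by
    rw [abs_mul]
    nlinarith [abs_nonneg (1-a), abs_nonneg a, abs_nonneg A, abs_nonneg (1-A)]
  exact ⟨⟨one_sub_ne b1, one_add_ne b2⟩, ⟨one_add_ne b3, one_sub_ne b4⟩⟩

lemma easy_dir {a b c d e A B C D E : ℝ}
    (fam : (b = 0 ∧ c = 0 ∧ d + e = 1 ∧ B = 0 ∧ C = 0 ∧ D + E = 1) ∨
       (b = 0 ∧ c = 0 ∧ d = 1 ∧ e = 0 ∧ C = 0 ∧ B + D + E = 1) ∨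
       (b = 0 ∧ c = 0 ∧ d = 0 ∧ e = 1 ∧ B = 0 ∧ C + D + E = 1) ∨
       (c = 0 ∧ b + d + e = 1 ∧ B = 0 ∧ C = 0 ∧ D = 0 ∧ E = 1) ∨
       (b = 0 ∧ c + d + e = 1 ∧ B = 0 ∧ C = 0 ∧ D = 1 ∧ E = 0) ∨
       (b = 0 ∧ e = 0 ∧ c + d = 1 ∧ C = 0 ∧ E = 0 ∧ B + D = 1) ∨
       (c = 0 ∧ d = 0 ∧ b + e = 1 ∧ B = 0 ∧ D = 0 ∧ C + E = 1)) :
    ∃ h₀ : ℝ, 0 < h₀ ∧ ∀ h : ℝ, h ≠ 0 → |h| < h₀ →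
        lvForwardRational h a b c d e A B C D E ∧
        lvBackwardRational h a b c d e A B C D E := by
  refine ⟨1/(1 + |a| + |1-a| + |A| + |1-A|), by positivity, fun h _ hh => ?_⟩
  obtain ⟨⟨n1, n2⟩, ⟨n3, n4⟩⟩ := small_bounds hh
  have m1 : (1:ℝ) - (-h)*(1-(1-a)) ≠ 0 := by intro hq; apply n3; linear_combination hq
  have m2 : (1:ℝ) + (-h)*(1-(1-A)) ≠ 0 := by intro hq; apply n4; linear_combination hq
  rcases fam with ⟨hb,hc,_,hB,hC,_⟩ | ⟨hb,hc,_,he,hC,_⟩ | ⟨hb,hc,hd,_,hB,_⟩ |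
    ⟨hc,_,hB,hC,hD,_⟩ | ⟨hb,_,hB,hC,hD,hE⟩ | ⟨hb,he,_,hC,hE,_⟩ | ⟨hc,hd,_,hB,hD,_⟩
  · exact ⟨forward_L2 hc hC n1 n2, backward_of_forward_neg (forward_L2 hb hB m1 m2)⟩
  · exact ⟨forward_L2 hc hC n1 n2, backward_of_forward_neg (forward_L3 hb he m1 m2)⟩
  · exact ⟨forward_L3 hc hd n1 n2, backward_of_forward_neg (forward_L2 hb hB m1 m2)⟩
  · exact ⟨forward_L2 hc hC n1 n2, backward_of_forward_neg (forward_L1 hB hD m1 m2)⟩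
  · exact ⟨forward_L1 hC hE n1 n2, backward_of_forward_neg (forward_L2 hb hB m1 m2)⟩
  · exact ⟨forward_L1 hC hE n1 n2, backward_of_forward_neg (forward_L3 hb he m1 m2)⟩
  · exact ⟨forward_L3 hc hd n1 n2, backward_of_forward_neg (forward_L1 hB hD m1 m2)⟩

/-! ## Hard direction machinery -/

def aF (h c d A C D x : ℝ) : ℝ := -(h*c)*(1 + h*(1-A) - h*D*x) - h^2*d*C*x
def bF (h a b c d e A B C D E x y : ℝ) : ℝ :=
  h*C*((1+h*a)*x - h*b*(x*y)) - h^2*d*E*(x*y)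
    - (1 + h*(1-A) - h*D*x)*(1 - h*(1-a) + h*e*y) + h*c*((1-h*A)*y + h*B*(x*y))
def cF (h a b e A B E x y : ℝ) : ℝ :=
  h*E*(y*((1+h*a)*x - h*b*(x*y))) + ((1-h*A)*y + h*B*(x*y))*(1 - h*(1-a) + h*e*y)

/-- Core two-solutions contradiction at a single point. -/
lemma core {h a b c d e A B C D E x y U V : ℝ}
    (hiff : ∀ u v : ℝ, lvSys h a b c d e A B C D E x y u v ↔ (u = U ∧ v = V))
    (hα : aF h c d A C D x ≠ 0)
    (hΔ : bF h a b c d e A B C D E x y ^ 2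
        - 4 * aF h c d A C D x * cF h a b e A B E x y ≠ 0)
    (hval : ∀ v : ℝ, aF h c d A C D x * v^2 + bF h a b c d e A B C D E x y * v
        + cF h a b e A B E x y = 0 → (1 - h*(1-a) + h*e*y) + h*c*v ≠ 0) :
    False := by
  obtain ⟨s1, s2⟩ := (hiff U V).mpr ⟨rfl, rfl⟩
  have root0 : aF h c d A C D x * V^2 + bF h a b c d e A B C D E x y * V
      + cF h a b e A B E x y = 0 := by
    simp only [aF, bF, cF]
    linear_combination (-(h*(C*V+E*y)))*s1 + (-((1 - h*(1-a) + h*e*y) + h*c*V))*s2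
  have hΔs : bF h a b c d e A B C D E x y ^ 2
      - 4 * aF h c d A C D x * cF h a b e A B E x y
      = (2 * aF h c d A C D x * V + bF h a b c d e A B C D E x y)^2 := by
    linear_combination (-4*(aF h c d A C D x))*root0
  have hs0 : 2 * aF h c d A C D x * V + bF h a b c d e A B C D E x y ≠ 0 := by
    intro hz; exact hΔ (by rw [hΔs, hz]; ring)
  set V2 : ℝ := V - (2 * aF h c d A C D x * V + bF h a b c d e A B C D E x y)
      / aF h c d A C D x with hV2def
  have hav : aF h c d A C D x * V2 + aF h c d A C D x * V
      + bF h a b c d e A B C D E x y = 0 := by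
    rw [hV2def]; field_simp; ring
  have hne : V2 ≠ V := by
    intro heq
    rw [hV2def] at heq
    have hz : (2 * aF h c d A C D x * V + bF h a b c d e A B C D E x y)
        / aF h c d A C D x = 0 := by linarith
    rcases div_eq_zero_iff.mp hz with h' | h'
    · exact hs0 h'
    · exact hα h'
  have root2' : aF h c d A C D x * (aF h c d A C D x * V2^2
      + bF h a b c d e A B C D E x y * V2 + cF h a b e A B E x y) = 0 := by
    linear_combination (aF h c d A C D x * V2 - aF h c d A C D x * V)*hav
      + (aF h c d A C D x)*root0
  have root2 : aF h c d A C D x * V2^2 + bF h a b c d e A B C D E x y * V2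
      + cF h a b e A B E x y = 0 := (mul_eq_zero.mp root2').resolve_left hα
  have hp2 : (1 - h*(1-a) + h*e*y) + h*c*V2 ≠ 0 := hval V2 root2
  set U2 : ℝ := (((1+h*a)*x - h*b*(x*y)) - h*d*x*V2) / ((1 - h*(1-a) + h*e*y) + h*c*V2)
    with hU2def
  have E1 : U2 * ((1 - h*(1-a) + h*e*y) + h*c*V2)
      = ((1+h*a)*x - h*b*(x*y)) - h*d*x*V2 := by
    rw [hU2def]; exact div_mul_cancel₀ _ hp2
  have lv2 : lvSys h a b c d e A B C D E x y U2 V2 := by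
    constructor
    · linear_combination E1
    · have G : ((V2*(1 + h*(1-A) - h*D*x) - ((1-h*A)*y + h*B*(x*y)))
          - h*U2*(C*V2+E*y)) * ((1 - h*(1-a) + h*e*y) + h*c*V2) = 0 := by
        have root2u : aF h c d A C D x * V2^2 + bF h a b c d e A B C D E x y * V2
            + cF h a b e A B E x y = 0 := root2
        simp only [aF, bF, cF] at root2u
        linear_combination (-1)*root2u - h*(C*V2+E*y)*E1
      have := (mul_eq_zero.mp G).resolve_right hp2
      linear_combination this
  exact hne ((hiff U2 V2).mp lv2).2

lemma exists_eval_ne_zero {Z : MvPolynomial (Fin 2) ℝ} (hZ : Z ≠ 0) :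
    ∃ x y : ℝ, MvPolynomial.eval ![x, y] Z ≠ 0 := by
  by_contra hcon
  push_neg at hcon
  apply hZ
  apply MvPolynomial.funext
  intro pt
  have h1 : ![pt 0, pt 1] = pt := by funext i; fin_cases i <;> simp
  have := hcon (pt 0) (pt 1)
  rw [h1] at this
  simpa using this

lemma affineX1_ne {k l : ℝ} (hkl : ¬(k = 0 ∧ l = 0)) :
    (MvPolynomial.C k + MvPolynomial.C l * X 1 : MvPolynomial (Fin 2) ℝ) ≠ 0 := by
  intro h0
  have h1 := congrArg (MvPolynomial.eval ![(0:ℝ), 0]) h0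
  have h2 := congrArg (MvPolynomial.eval ![(0:ℝ), 1]) h0
  simp only [map_add, map_mul, MvPolynomial.eval_C, MvPolynomial.eval_X,
    Matrix.cons_val_zero, Matrix.cons_val_one, Matrix.head_cons, map_zero,
    mul_zero, mul_one, add_zero] at h1 h2
  exact hkl ⟨h1, by linarith⟩

lemma affineX0_ne {k l : ℝ} (hkl : ¬(k = 0 ∧ l = 0)) :
    (MvPolynomial.C k + MvPolynomial.C l * X 0 : MvPolynomial (Fin 2) ℝ) ≠ 0 := by
  intro h0
  have h1 := congrArg (MvPolynomial.eval ![(0:ℝ), 0]) h0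
  have h2 := congrArg (MvPolynomial.eval ![(1:ℝ), 0]) h0
  simp only [map_add, map_mul, MvPolynomial.eval_C, MvPolynomial.eval_X,
    Matrix.cons_val_zero, Matrix.cons_val_one, Matrix.head_cons, map_zero,
    mul_zero, mul_one, add_zero] at h1 h2
  exact hkl ⟨h1, by linarith⟩

noncomputable def alP (h c d A C D : ℝ) : MvPolynomial (Fin 2) ℝ :=
  MvPolynomial.C (-(h*c)*(1+h*(1-A))) + MvPolynomial.C (h^2*(c*D - d*C)) * X 0
noncomputable def beP (h a b c d e A B C D E : ℝ) : MvPolynomial (Fin 2) ℝ :=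
  MvPolynomial.C (h*C) * qP h a b - MvPolynomial.C (h^2*d*E) * (X 0 * X 1)
    - rP h A D * pP h a e + MvPolynomial.C (h*c) * sP h A B
noncomputable def gaP (h a b e A B E : ℝ) : MvPolynomial (Fin 2) ℝ :=
  MvPolynomial.C (h*E) * (X 1 * qP h a b) + sP h A B * pP h a e

lemma eval_alP (h c d A C D x y : ℝ) :
    MvPolynomial.eval ![x, y] (alP h c d A C D) = aF h c d A C D x := by
  simp only [alP, aF, map_add, map_mul, MvPolynomial.eval_C, MvPolynomial.eval_X,
    Matrix.cons_val_zero]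
  ring

lemma eval_beP (h a b c d e A B C D E x y : ℝ) :
    MvPolynomial.eval ![x, y] (beP h a b c d e A B C D E)
      = bF h a b c d e A B C D E x y := by
  simp only [beP, bF, map_add, map_mul, map_sub, eval_pP, eval_qP, eval_rP, eval_sP,
    MvPolynomial.eval_C, MvPolynomial.eval_X, Matrix.cons_val_zero, Matrix.cons_val_one,
    Matrix.head_cons]
  try ring

lemma eval_gaP (h a b e A B E x y : ℝ) :
    MvPolynomial.eval ![x, y] (gaP h a b e A B E) = cF h a b e A B E x y := by
  simp only [gaP, cF, map_add, map_mul, map_sub, eval_pP, eval_qP, eval_rP, eval_sP,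
    MvPolynomial.eval_C, MvPolynomial.eval_X, Matrix.cons_val_zero, Matrix.cons_val_one,
    Matrix.head_cons]
  try ring

/-- Point-based contradiction machine for the forward map. -/
lemma forward_key {h a b c d e A B C D E : ℝ} {VP : MvPolynomial (Fin 2) ℝ}
    (hF : lvForwardRational h a b c d e A B C D E)
    (n1 : 1 - h*(1-a) ≠ 0) (n2 : 1 + h*(1-A) ≠ 0)
    (hαP : alP h c d A C D ≠ 0)
    (hVP : VP ≠ 0)
    (hval : ∀ x y v : ℝ, MvPolynomial.eval ![x, y] VP ≠ 0 →
        aF h c d A C D x * v^2 + bF h a b c d e A B C D E x y * v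
          + cF h a b e A B E x y = 0 →
        (1 - h*(1-a) + h*e*y) + h*c*v ≠ 0) :
    False := by
  obtain ⟨P₁, Q₁, P₂, Q₂, W, hW, hmain⟩ := hF
  have hDe0 : MvPolynomial.eval ![(0:ℝ), 0]
      (beP h a b c d e A B C D E ^ 2 - MvPolynomial.C 4 * (alP h c d A C D * gaP h a b e A B E))
      = ((1 + h*(1-A)) * (1 - h*(1-a)))^2 := by
    rw [map_sub, map_pow, map_mul, map_mul, eval_beP, eval_alP, eval_gaP, MvPolynomial.eval_C]
    simp only [bF, cF]
    ring
  have hDeP : (beP h a b c d e A B C D E ^ 2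
      - MvPolynomial.C 4 * (alP h c d A C D * gaP h a b e A B E)) ≠ 0 := by
    intro h0
    have := hDe0
    rw [h0, map_zero] at this
    exact (pow_ne_zero 2 (mul_ne_zero n2 n1)) this.symm
  have hZ : W * alP h c d A C D
      * (beP h a b c d e A B C D E ^ 2 - MvPolynomial.C 4 * (alP h c d A C D * gaP h a b e A B E))
      * VP ≠ 0 :=
    mul_ne_zero (mul_ne_zero (mul_ne_zero hW hαP) hDeP) hVP
  obtain ⟨x, y, hxy⟩ := exists_eval_ne_zero hZ
  rw [map_mul, map_mul, map_mul] at hxy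
  have hWx : MvPolynomial.eval ![x, y] W ≠ 0 := by
    intro h0; apply hxy; rw [h0]; ring
  have hαx : MvPolynomial.eval ![x, y] (alP h c d A C D) ≠ 0 := by
    intro h0; apply hxy; rw [h0]; ring
  have hΔx : MvPolynomial.eval ![x, y] (beP h a b c d e A B C D E ^ 2
      - MvPolynomial.C 4 * (alP h c d A C D * gaP h a b e A B E)) ≠ 0 := by
    intro h0; apply hxy; rw [h0]; ring
  have hVx : MvPolynomial.eval ![x, y] VP ≠ 0 := by
    intro h0; apply hxy; rw [h0]; ring
  rw [eval_alP] at hαx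
  rw [map_sub, map_pow, map_mul, map_mul, eval_beP, eval_alP, eval_gaP, MvPolynomial.eval_C] at hΔx
  have hiff := (hmain x y hWx).2.2
  refine core (U := MvPolynomial.eval ![x, y] P₁ / MvPolynomial.eval ![x, y] Q₁)
    (V := MvPolynomial.eval ![x, y] P₂ / MvPolynomial.eval ![x, y] Q₂)
    hiff hαx ?_ (fun v hroot => hval x y v hVx hroot)
  intro h0; apply hΔx; rw [← h0]; ring

/-- Branch extraction (case `c ≠ 0`): the spurious-factor polynomial must vanish. -/
lemma lemA1 {h a b c d e A B C D E : ℝ}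
    (hF : lvForwardRational h a b c d e A B C D E)
    (hh : h ≠ 0) (n1 : 1 - h*(1-a) ≠ 0) (n2 : 1 + h*(1-A) ≠ 0)
    (hc : c ≠ 0) (hCE : ¬(C = 0 ∧ E = 0)) :
    c*(1+h*a) + d*(1-h*(1-a)) = 0 := by
  by_cases hbr : (c*(1+h*a) + d*(1-h*(1-a)) = 0 ∧ h*(d*e - c*b) = 0)
      ∨ (-(C*(1-h*(1-a))) = 0 ∧ h*(c*E - e*C) = 0)
  · rcases hbr with ⟨h1, _⟩ | ⟨h3, h4⟩
    · exact h1
    · exfalso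
      have hC0 : C = 0 := by
        rcases mul_eq_zero.mp (neg_eq_zero.mp h3) with h' | h'
        · exact h'
        · exact absurd h' n1
      have hE0 : E = 0 := by
        rw [hC0] at h4
        rcases mul_eq_zero.mp h4 with h' | h'
        · exact absurd h' hh
        · rcases mul_eq_zero.mp (by linear_combination h' : c * E = 0) with h'' | h''
          · exact absurd h'' hc
          · exact h''
      exact hCE ⟨hC0, hE0⟩
  · exfalso
    have hf1 : ¬(c*(1+h*a) + d*(1-h*(1-a)) = 0 ∧ h*(d*e - c*b) = 0) := fun hx => hbr (Or.inl hx)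
    have hf2 : ¬(-(C*(1-h*(1-a))) = 0 ∧ h*(c*E - e*C) = 0) := fun hx => hbr (Or.inr hx)
    have hf1' := affineX1_ne hf1
    have hf2' := affineX1_ne hf2
    have hX0 : (X 0 : MvPolynomial (Fin 2) ℝ) ≠ 0 := MvPolynomial.X_ne_zero 0
    have hVP : (X 0 * (MvPolynomial.C (c*(1+h*a) + d*(1-h*(1-a)))
          + MvPolynomial.C (h*(d*e - c*b)) * X 1)
        * (MvPolynomial.C (-(C*(1-h*(1-a)))) + MvPolynomial.C (h*(c*E - e*C)) * X 1)
        : MvPolynomial (Fin 2) ℝ) ≠ 0 :=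
      mul_ne_zero (mul_ne_zero hX0 hf1') hf2'
    have hαP : alP h c d A C D ≠ 0 := by
      apply affineX0_ne
      rintro ⟨hk, -⟩
      rcases mul_eq_zero.mp hk with h' | h'
      · rcases mul_eq_zero.mp (neg_eq_zero.mp h') with h'' | h''
        · exact hh h''
        · exact hc h''
      · exact n2 (by linear_combination h')
    refine forward_key hF n1 n2 hαP hVP ?_
    intro x y v hV hroot hpz
    apply hV
    rw [map_mul, map_mul]
    simp only [map_add, map_mul, MvPolynomial.eval_C, MvPolynomial.eval_X,
      Matrix.cons_val_zero, Matrix.cons_val_one, Matrix.head_cons]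
    simp only [aF, bF, cF] at hroot
    linear_combination (c^2)*hroot
      - ((-(c^2)*(1 + h*(1-A) - h*D*x) - h*c*d*C*x)*v
        + c*(C*((1+h*a)*x - h*b*(x*y)) - h*d*E*(x*y) + c*((1-h*A)*y + h*B*(x*y)))
        + d*C*x*(1 - h*(1-a) + h*e*y))*hpz

/-- Contradiction in the case `c = 0`, `d*C ≠ 0`. -/
lemma lemA2 {h a b c d e A B C D E : ℝ}
    (hF : lvForwardRational h a b c d e A B C D E)
    (hh : h ≠ 0) (n1 : 1 - h*(1-a) ≠ 0) (n2 : 1 + h*(1-A) ≠ 0)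
    (hc : c = 0) (hd : d ≠ 0) (hC : C ≠ 0) : False := by
  subst hc
  have hαP : alP h 0 d A C D ≠ 0 := by
    apply affineX0_ne
    rintro ⟨-, hl⟩
    have : h^2 * (d*C) ≠ 0 := mul_ne_zero (pow_ne_zero 2 hh) (mul_ne_zero hd hC)
    exact this (by linear_combination -hl)
  have hVP : pP h a e ≠ 0 := by
    apply affineX1_ne
    rintro ⟨hk, -⟩
    exact n1 hk
  refine forward_key hF n1 n2 hαP hVP ?_
  intro x y v hV hroot hpz
  apply hV
  rw [eval_pP]
  linear_combination hpz

/-- From forward rationality for all small `h`, the forward degeneracy conditions. -/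
lemma forward_Pf {h₀ a b c d e A B C D E : ℝ} (hh₀ : 0 < h₀)
    (hall : ∀ h : ℝ, h ≠ 0 → |h| < h₀ → lvForwardRational h a b c d e A B C D E) :
    (C = 0 ∧ E = 0) ∨ (c = 0 ∧ C = 0) ∨ (c = 0 ∧ d = 0) := by
  by_cases hCE : C = 0 ∧ E = 0
  · exact Or.inl hCE
  have hSpos : (0:ℝ) < 1/(1 + |a| + |1-a| + |A| + |1-A|) := by positivity
  set t := min h₀ (1/(1 + |a| + |1-a| + |A| + |1-A|)) with ht_def
  have ht : 0 < t := lt_min hh₀ hSpos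
  have hget : ∀ s : ℝ, 0 < s → s < t →
      lvForwardRational s a b c d e A B C D E ∧ (1 - s*(1-a) ≠ 0 ∧ 1 + s*(1-A) ≠ 0) := by
    intro s hs hst
    have hsabs : |s| = s := abs_of_pos hs
    have h1 : |s| < h₀ := by rw [hsabs]; exact lt_of_lt_of_le hst (min_le_left _ _)
    have h2 : |s| < 1/(1 + |a| + |1-a| + |A| + |1-A|) := by
      rw [hsabs]; exact lt_of_lt_of_le hst (min_le_right _ _)
    exact ⟨hall s (ne_of_gt hs) h1, (small_bounds h2).1⟩
  obtain ⟨hF1, n11, n12⟩ := hget (t/2) (by linarith) (by linarith)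
  obtain ⟨hF2, n21, n22⟩ := hget (t/4) (by linarith) (by linarith)
  have hc0 : c = 0 := by
    by_contra hc
    have k1 := lemA1 hF1 (by positivity) n11 n12 hc hCE
    have k2 := lemA1 hF2 (by positivity) n21 n22 hc hCE
    have hdiff : (t/2 - t/4) * (c*a - d*(1-a)) = 0 := by linear_combination k1 - k2
    have hM : c*a - d*(1-a) = 0 :=
      (mul_eq_zero.mp hdiff).resolve_left (by intro h'; linarith)
    have hcd : c + d = 0 := by linear_combination k1 - (t/2)*hM
    exact hc (by linear_combination hM + (1-a)*hcd)
  by_cases hC : C = 0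
  · exact Or.inr (Or.inl ⟨hc0, hC⟩)
  · refine Or.inr (Or.inr ⟨hc0, ?_⟩)
    by_contra hd
    exact lemA2 (hc0 ▸ hF1) (by positivity) n11 n12 rfl hd hC

/-- Classification of birational discrete Lotka–Volterra systems (Theorem 1 of the
paper): the general discretization with constraints `b+c+d+e = 1 = B+C+D+E` defines a
birational map of the plane for all sufficiently small `h ≠ 0` if and only if the
parameters `{a,b,c,d,e,A,B,C,D,E}` belong to one of the seven families
(i) `{a,0,0,d,e,A,0,0,D,E}`, `d+e = 1 = D+E`;
(ii) `{a,0,0,1,0,A,B,0,D,E}`, `B+D+E = 1`;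
(iii) `{a,0,0,0,1,A,0,C,D,E}`, `C+D+E = 1`;
(iv) `{a,b,0,d,e,A,0,0,0,1}`, `b+d+e = 1`;
(v) `{a,0,c,d,e,A,0,0,1,0}`, `c+d+e = 1`;
(vi) `{a,0,c,d,0,A,B,0,D,0}`, `c+d = 1 = B+D`;
(vii) `{a,b,0,0,e,A,0,C,0,E}`, `b+e = 1 = C+E`. -/
theorem lv_birational_classification (a b c d e A B C D E : ℝ)
    (hcon1 : b + c + d + e = 1) (hcon2 : B + C + D + E = 1) :
    (∃ h₀ : ℝ, 0 < h₀ ∧ ∀ h : ℝ, h ≠ 0 → |h| < h₀ →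
        lvForwardRational h a b c d e A B C D E ∧
        lvBackwardRational h a b c d e A B C D E)
    ↔ ((b = 0 ∧ c = 0 ∧ d + e = 1 ∧ B = 0 ∧ C = 0 ∧ D + E = 1) ∨
       (b = 0 ∧ c = 0 ∧ d = 1 ∧ e = 0 ∧ C = 0 ∧ B + D + E = 1) ∨
       (b = 0 ∧ c = 0 ∧ d = 0 ∧ e = 1 ∧ B = 0 ∧ C + D + E = 1) ∨
       (c = 0 ∧ b + d + e = 1 ∧ B = 0 ∧ C = 0 ∧ D = 0 ∧ E = 1) ∨
       (b = 0 ∧ c + d + e = 1 ∧ B = 0 ∧ C = 0 ∧ D = 1 ∧ E = 0) ∨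
       (b = 0 ∧ e = 0 ∧ c + d = 1 ∧ C = 0 ∧ E = 0 ∧ B + D = 1) ∨
       (c = 0 ∧ d = 0 ∧ b + e = 1 ∧ B = 0 ∧ D = 0 ∧ C + E = 1)) := by
  constructor
  · rintro ⟨h₀, hh₀, hall⟩
    have hPf := forward_Pf hh₀ (fun h hne hlt => (hall h hne hlt).1)
    have hPb : (B = 0 ∧ D = 0) ∨ (b = 0 ∧ B = 0) ∨ (b = 0 ∧ e = 0) := by
      refine forward_Pf (h₀ := h₀) (a := 1-a) (b := c) (c := b) (d := e) (e := d)
        (A := 1-A) (B := C) (C := B) (D := E) (E := D) hh₀ (fun h hne hlt => ?_)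
      have hB := (hall (-h) (neg_ne_zero.mpr hne) (by rwa [abs_neg])).2
      have := forward_neg_of_backward hB
      rwa [neg_neg] at this
    rcases hPf with ⟨hC, hE⟩ | ⟨hc, hC⟩ | ⟨hc, hd⟩ <;>
      rcases hPb with ⟨hB, hD⟩ | ⟨hb, hB⟩ | ⟨hb, he⟩
    · exact absurd hcon2 (by rw [hB, hC, hD, hE]; norm_num)
    · exact Or.inr (Or.inr (Or.inr (Or.inr (Or.inl
        ⟨hb, by linarith, hB, hC, by linarith, hE⟩))))
    · exact Or.inr (Or.inr (Or.inr (Or.inr (Or.inr (Or.inl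
        ⟨hb, he, by linarith, hC, hE, by linarith⟩)))))
    · exact Or.inr (Or.inr (Or.inr (Or.inl ⟨hc, by linarith, hB, hC, hD, by linarith⟩)))
    · exact Or.inl ⟨hb, hc, by linarith, hB, hC, by linarith⟩
    · exact Or.inr (Or.inl ⟨hb, hc, by linarith, he, hC, by linarith⟩)
    · exact Or.inr (Or.inr (Or.inr (Or.inr (Or.inr (Or.inr
        ⟨hc, hd, by linarith, hB, hD, by linarith⟩)))))
    · exact Or.inr (Or.inr (Or.inl ⟨hb, hc, hd, by linarith, hB, by linarith⟩))
    · exact absurd hcon1 (by rw [hb, hc, hd, he]; norm_num)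
  · exact easy_dir
end

section
/- Fix real parameters a, b and h ≠ 0. The discretization of Schnakenberg's system given by (x̃ − x)/h = a − (1/2)(x̃ + x) + x x̃ ỹ, (ỹ − y)/h = b − x² ỹ defines a birational map φ_h of the plane: explicitly, ỹ = (y + hb)/(1 + h x²) and x̃ = (x + h a − (h/2) x)/(1 + h/2 − h x ỹ) whenever the denominators are nonzero, and conversely (x, y) are given by rational functions of (x̃, ỹ) on a Zariski-dense open set. -/
/-- The non-standard discretization of Schnakenberg's system
`ẋ = a - x + x²y`, `ẏ = b - x²y`, given by
`(x̃-x)/h = a - (x̃+x)/2 + x x̃ ỹ`, `(ỹ-y)/h = b - x² ỹ`, defines a birational map of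
the plane: explicitly `ỹ = (y + hb)/(1 + hx²)` and
`x̃ = (x + ha - (h/2)x)/(1 + h/2 - h x ỹ)` whenever the denominators are nonzero, and
conversely `(x,y)` are rational functions of `(x̃,ỹ)` on a Zariski-dense open set:
`x = (x̃(1 + h/2) - ha)/(1 - h/2 + h x̃ ỹ)`, `y = ỹ(1 + hx²) - hb`. -/
theorem schnakenberg_birational (a b h : ℝ) (hh : h ≠ 0) :
    (∀ x y xt yt : ℝ,
      1 + h * x ^ 2 ≠ 0 →
      1 + h / 2 - h * x * ((y + h * b) / (1 + h * x ^ 2)) ≠ 0 →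
      ((xt - x = h * (a - (xt + x) / 2 + x * xt * yt) ∧
        yt - y = h * (b - x ^ 2 * yt)) ↔
       (yt = (y + h * b) / (1 + h * x ^ 2) ∧
        xt = (x + h * a - (h / 2) * x) / (1 + h / 2 - h * x * yt))))
    ∧ (∀ xt yt : ℝ,
        1 - h / 2 + h * xt * yt ≠ 0 →
        ∀ x y : ℝ,
          ((xt - x = h * (a - (xt + x) / 2 + x * xt * yt) ∧
            yt - y = h * (b - x ^ 2 * yt)) ↔
           (x = (xt * (1 + h / 2) - h * a) / (1 - h / 2 + h * xt * yt) ∧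
            y = yt * (1 + h * x ^ 2) - h * b))) := by
  constructor
  · intro x y xt yt h1 h2
    constructor
    · rintro ⟨e1, e2⟩
      have hyt : yt = (y + h * b) / (1 + h * x ^ 2) := by
        rw [eq_div_iff h1]; linear_combination e2
      rw [← hyt] at h2
      refine ⟨hyt, ?_⟩
      rw [eq_div_iff h2]; linear_combination e1
    · rintro ⟨hyt, hxt⟩
      rw [← hyt] at h2
      rw [eq_div_iff h2] at hxt
      rw [eq_div_iff h1] at hyt
      exact ⟨by linear_combination hxt, by linear_combination hyt⟩
  · intro xt yt hd x y
    constructor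
    · rintro ⟨e1, e2⟩
      have hx : x = (xt * (1 + h / 2) - h * a) / (1 - h / 2 + h * xt * yt) := by
        rw [eq_div_iff hd]; linear_combination -e1
      exact ⟨hx, by linear_combination -e2⟩
    · rintro ⟨hx, hy⟩
      rw [eq_div_iff hd] at hx
      exact ⟨by linear_combination -hx, by linear_combination -hy⟩
end
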